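/- Let N ≥ 1, let w_1,…,w_N > 0, u_1,…,u_N ∈ ℝ, σ² > 0, and let ρ, U, θ ∈ ℝ. If Σ_{i=1}^N w_i·Δ_j(u_i, σ²) = ρ·Δ_j(U, θ) holds for every j = 0, 1, …, 2N, then necessarily u_1 = u_2 = … = u_N = U, σ² = θ, and Σ_{i=1}^N w_i = ρ. (Equilibrium states of the Gaussian-EQMOM moment system for the BGK collision model lie in Ω_W^{eq}.) -/

import Mathlib

/-- `Δ_j(u,t) = Σ_{k=0}^{⌊j/2⌋} (j!/(k!(j−2k)!))·(t/2)^k·u^{j−2k}`; for `t > 0` this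
is the `j`-th moment of the Gaussian density with mean `u` and variance `t`. -/
noncomputable def DeltaFun (j : ℕ) (u t : ℝ) : ℝ :=
  ∑ k ∈ Finset.range (j/2 + 1),
    ((j.factorial : ℝ) / ((k.factorial : ℝ) * ((j - 2*k).factorial : ℝ)))
      * (t/2)^k * u^(j - 2*k)

open Polynomial Finset

noncomputable def hsum (B : ℕ) (u t : ℝ) (p : ℝ[X]) : ℝ :=
  ∑ k ∈ range B, t^k/(2^k * k.factorial) * ((derivative^[2*k]) p).eval u

lemma hsum_mono {B B' : ℕ} (u t : ℝ) (p : ℝ[X]) (hB : p.natDegree < B) (hBB : B ≤ B') :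
    hsum B u t p = hsum B' u t p := by
  refine Finset.sum_subset (Finset.range_subset_range.mpr hBB) fun k _ hk => ?_
  simp only [mem_range, not_lt] at hk
  rw [Polynomial.iterate_derivative_eq_zero (by omega : p.natDegree < 2*k)]
  simp

lemma hsum_stable {B B' : ℕ} (u t : ℝ) (p : ℝ[X]) (hB : p.natDegree < B)
    (hB' : p.natDegree < B') : hsum B u t p = hsum B' u t p := by
  rcases le_total B B' with h | h
  · exact hsum_mono u t p hB h
  · exact (hsum_mono u t p hB' h).symm

noncomputable def Lf (u t : ℝ) (p : ℝ[X]) : ℝ := hsum (p.natDegree + 1) u t p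

lemma Lf_eq_hsum (B : ℕ) (u t : ℝ) (p : ℝ[X]) (hB : p.natDegree < B) :
    Lf u t p = hsum B u t p :=
  hsum_stable u t p (Nat.lt_succ_self _) hB

lemma hsum_add (B : ℕ) (u t : ℝ) (p q : ℝ[X]) :
    hsum B u t (p + q) = hsum B u t p + hsum B u t q := by
  simp [hsum, Finset.sum_add_distrib, mul_add, iterate_map_add]

lemma hsum_smul (B : ℕ) (u t c : ℝ) (p : ℝ[X]) :
    hsum B u t (c • p) = c * hsum B u t p := by
  simp only [hsum, Finset.mul_sum, Polynomial.iterate_derivative_smul, eval_smul, smul_eq_mul]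
  refine Finset.sum_congr rfl fun k _ => by ring

lemma Lf_zero (u t : ℝ) : Lf u t 0 = 0 := by simp [Lf, hsum]

lemma Lf_add (u t : ℝ) (p q : ℝ[X]) : Lf u t (p + q) = Lf u t p + Lf u t q := by
  have h1 : (p+q).natDegree < max (p+q).natDegree (max p.natDegree q.natDegree) + 1 := by omega
  have h2 : p.natDegree < max (p+q).natDegree (max p.natDegree q.natDegree) + 1 := by
    have := le_max_left p.natDegree q.natDegree; omega
  have h3 : q.natDegree < max (p+q).natDegree (max p.natDegree q.natDegree) + 1 := by
    have := le_max_right p.natDegree q.natDegree; omega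
  rw [Lf_eq_hsum _ u t (p+q) h1, Lf_eq_hsum _ u t p h2, Lf_eq_hsum _ u t q h3, hsum_add]

lemma Lf_smul (u t c : ℝ) (p : ℝ[X]) : Lf u t (c • p) = c * Lf u t p := by
  have h1 : (c • p).natDegree < p.natDegree + 1 :=
    Nat.lt_succ_of_le (Polynomial.natDegree_smul_le c p)
  rw [Lf_eq_hsum _ u t (c • p) h1, hsum_smul]; rfl

lemma Lf_C (u t c : ℝ) : Lf u t (C c) = c := by
  have : (C c : ℝ[X]).natDegree < 1 := by simp [natDegree_C]
  rw [Lf_eq_hsum 1 u t (C c) this]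
  simp [hsum]

lemma Lf_X_pow (u t : ℝ) (j : ℕ) : Lf u t (X ^ j) = DeltaFun j u t := by
  rw [Lf_eq_hsum (j+1) u t (X ^ j) (by simp [natDegree_X_pow]), hsum]
  rw [show (j + 1) = (j/2 + 1) + (j + 1 - (j/2+1)) by omega, Finset.sum_range_add]
  have h2 : ∀ k ∈ Finset.range (j + 1 - (j/2+1)),
      t^(j/2+1+k)/(2^(j/2+1+k) * ((j/2+1+k).factorial : ℝ))
        * ((derivative^[2*(j/2+1+k)]) (X^j : ℝ[X])).eval u = 0 := by
    intro k _
    rw [Polynomial.iterate_derivative_eq_zero (by simp only [natDegree_X_pow]; omega)]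
    simp
  rw [Finset.sum_eq_zero h2, add_zero, DeltaFun]
  refine Finset.sum_congr rfl fun k hk => ?_
  simp only [mem_range] at hk
  have h2k : 2*k ≤ j := by omega
  rw [Polynomial.iterate_derivative_X_pow_eq_smul]
  have hfact : ((j - 2*k).factorial : ℝ) * (j.descFactorial (2*k) : ℝ) = (j.factorial : ℝ) := by
    rw [← Nat.cast_mul, Nat.factorial_mul_descFactorial h2k]
  simp only [eval_smul, eval_pow, eval_X, smul_eq_mul]
  have hf1 : ((j-2*k).factorial : ℝ) ≠ 0 := Nat.cast_ne_zero.2 (Nat.factorial_ne_zero _)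
  have hf2 : ((k).factorial : ℝ) ≠ 0 := Nat.cast_ne_zero.2 (Nat.factorial_ne_zero _)
  have h2p : (2:ℝ)^k ≠ 0 := by positivity
  rw [← hfact, div_pow]
  field_simp

lemma DeltaFun_zero (u t : ℝ) : DeltaFun 0 u t = 1 := by
  simp [DeltaFun]

lemma DeltaFun_one (u t : ℝ) : DeltaFun 1 u t = u := by
  simp [DeltaFun]

lemma DeltaFun_two (u t : ℝ) : DeltaFun 2 u t = u^2 + t := by
  rw [DeltaFun]
  norm_num [Finset.sum_range_succ]
  ring

lemma DeltaFun_t_zero (j : ℕ) (u : ℝ) : DeltaFun j u 0 = u ^ j := by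
  rw [DeltaFun]
  rw [Finset.sum_eq_single 0]
  · simp only [Nat.factorial_zero, Nat.cast_one, one_mul, Nat.mul_zero, Nat.sub_zero, pow_zero,
      mul_one]
    rw [div_self (Nat.cast_ne_zero.2 (Nat.factorial_ne_zero j)), one_mul]
  · intro k _ hk
    simp [zero_pow, hk]
  · simp

/-- triangle sum swap -/
lemma tri_swap (B : ℕ) (f : ℕ → ℕ → ℝ) :
    ∑ m ∈ Finset.range B, ∑ k ∈ Finset.range (m+1), f k (m-k)
      = ∑ k ∈ Finset.range B, ∑ l ∈ Finset.range (B - k), f k l := by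
  induction B with
  | zero => simp
  | succ B ih =>
    have h1 : ∀ k ∈ Finset.range B, ∑ l ∈ Finset.range (B + 1 - k), f k l
        = ∑ l ∈ Finset.range (B - k), f k l + f k (B - k) := by
      intro k hk
      simp only [Finset.mem_range] at hk
      rw [show B + 1 - k = (B - k) + 1 by omega, Finset.sum_range_succ]
    have hrhs : ∑ k ∈ Finset.range (B+1), ∑ l ∈ Finset.range (B+1-k), f k l
        = (∑ k ∈ Finset.range B, ∑ l ∈ Finset.range (B-k), f k l)
          + ((∑ k ∈ Finset.range B, f k (B-k)) + f B 0) := by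
      rw [Finset.sum_range_succ, Finset.sum_congr rfl h1, Finset.sum_add_distrib]
      simp only [Nat.add_sub_cancel_left, Finset.range_one, Finset.sum_singleton]
      ring
    rw [Finset.sum_range_succ, ih, hrhs, Finset.sum_range_succ]
    simp only [Nat.sub_self]

lemma iter_deriv_X_mul (p : ℝ[X]) : ∀ n : ℕ,
    derivative^[n+1] (X * p) = X * derivative^[n+1] p + ((n:ℝ)+1) • derivative^[n] p := by
  intro n
  induction n with
  | zero =>
    simp only [zero_add, Function.iterate_one, Function.iterate_zero_apply, derivative_mul,
      derivative_X, one_mul, Nat.cast_zero, one_smul]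
    exact add_comm _ _
  | succ n ih =>
    rw [Function.iterate_succ_apply', ih]
    simp only [derivative_add, derivative_mul, derivative_X, one_mul, derivative_smul,
      ← Function.iterate_succ_apply']
    push_cast
    module

lemma natDegree_iter_deriv_le (p : ℝ[X]) (n : ℕ) :
    (derivative^[n] p).natDegree ≤ p.natDegree :=
  (Polynomial.natDegree_iterate_derivative p n).trans (Nat.sub_le _ _)

/-- Stein's identity for the functional `Lf`. -/
lemma Lf_stein (u t : ℝ) (p : ℝ[X]) :
    Lf u t (X * p) = u * Lf u t p + t * Lf u t (derivative p) := by
  set n : ℕ := p.natDegree with hn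
  set B : ℕ := n + 2 with hBdef
  have hXp : (X * p).natDegree < B := by
    have := Polynomial.natDegree_mul_le (p := (X : ℝ[X])) (q := p)
    simp only [natDegree_X] at this
    omega
  have hp : p.natDegree < B := by omega
  have hdp : (derivative p).natDegree < B := by
    have := Polynomial.natDegree_derivative_le p; omega
  rw [Lf_eq_hsum B u t (X*p) hXp, Lf_eq_hsum B u t p hp, Lf_eq_hsum B u t _ hdp]
  have hc0 : t^0/(2^0 * ((0:ℕ).factorial : ℝ)) = 1 := by norm_num
  have hterm : ∀ k : ℕ,
      t^(k+1)/(2^(k+1) * ((k+1).factorial : ℝ)) * ((derivative^[2*(k+1)]) (X*p)).eval u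
      = u * (t^(k+1)/(2^(k+1) * ((k+1).factorial : ℝ)) * ((derivative^[2*(k+1)]) p).eval u)
        + t * (t^k/(2^k * (k.factorial : ℝ)) * ((derivative^[2*k]) (derivative p)).eval u) := by
    intro k
    have h1 : derivative^[2*(k+1)] (X * p)
        = X * derivative^[2*(k+1)] p + (((2*k+1 : ℕ) : ℝ)+1) • derivative^[2*k+1] p := by
      rw [show 2*(k+1) = (2*k+1)+1 by ring]
      exact iter_deriv_X_mul p (2*k+1)
    rw [h1]
    have h2 : (derivative^[2*k] (derivative p)) = derivative^[2*k+1] p := by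
      rw [← Function.iterate_succ_apply]
    rw [h2]
    simp only [eval_add, eval_mul, eval_X, eval_smul, smul_eq_mul]
    have hk1 : ((k+1).factorial : ℝ) = (k+1) * k.factorial := by
      push_cast [Nat.factorial_succ]; ring
    have hkf : (k.factorial : ℝ) ≠ 0 := Nat.cast_ne_zero.2 (Nat.factorial_ne_zero _)
    have h2p : (2:ℝ)^k ≠ 0 := by positivity
    rw [hk1]
    push_cast
    field_simp
    ring
  have hL : hsum B u t (X*p)
      = (∑ k ∈ Finset.range (n+1),
          u * (t^(k+1)/(2^(k+1) * ((k+1).factorial : ℝ)) * ((derivative^[2*(k+1)]) p).eval u))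
        + (∑ k ∈ Finset.range (n+1),
          t * (t^k/(2^k * (k.factorial : ℝ)) * ((derivative^[2*k]) (derivative p)).eval u))
        + u * p.eval u := by
    rw [hsum, hBdef, Finset.sum_range_succ']
    rw [Finset.sum_congr rfl (fun k _ => hterm k), Finset.sum_add_distrib]
    simp only [Nat.mul_zero, Function.iterate_zero_apply, pow_zero, Nat.factorial_zero,
      Nat.cast_one, mul_one, one_mul, one_div]
    rw [eval_mul, eval_X]
    ring
  have hR1 : u * hsum B u t p
      = (∑ k ∈ Finset.range (n+1),
          u * (t^(k+1)/(2^(k+1) * ((k+1).factorial : ℝ)) * ((derivative^[2*(k+1)]) p).eval u))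
        + u * p.eval u := by
    rw [hsum, hBdef, Finset.sum_range_succ', mul_add, Finset.mul_sum]
    simp only [Nat.mul_zero, Function.iterate_zero_apply, pow_zero, Nat.factorial_zero,
      Nat.cast_one, mul_one, one_mul, one_div]
    norm_num
  have hR2 : t * hsum B u t (derivative p)
      = ∑ k ∈ Finset.range (n+1),
          t * (t^k/(2^k * (k.factorial : ℝ)) * ((derivative^[2*k]) (derivative p)).eval u) := by
    rw [hsum, hBdef, show n + 2 = (n+1)+1 by rfl, Finset.sum_range_succ]
    have hz : derivative^[2*(n+1)] (derivative p) = 0 := by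
      apply Polynomial.iterate_derivative_eq_zero
      have := Polynomial.natDegree_derivative_le p
      omega
    rw [hz]
    simp only [eval_zero, mul_zero, add_zero, Finset.mul_sum]
  rw [hL, hR1, hR2]
  ring

/-- Heat semigroup identity for `Lf`. -/
lemma Lf_semigroup (u t c : ℝ) (p : ℝ[X]) (B : ℕ) (hB : p.natDegree < B) :
    Lf u (t + c) p
      = ∑ k ∈ Finset.range B, c^k/(2^k * (k.factorial : ℝ)) * Lf u t (derivative^[2*k] p) := by
  set f : ℕ → ℕ → ℝ := fun k l =>
    c^k/(2^k * (k.factorial : ℝ))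
      * (t^l/(2^l * (l.factorial : ℝ)) * ((derivative^[2*(k+l)]) p).eval u) with hf
  have hkey : ∀ m k : ℕ, k ≤ m →
      f k (m-k) = c^k * t^(m-k) * ((m.choose k : ℕ) : ℝ) / (2^m * (m.factorial : ℝ))
        * ((derivative^[2*m]) p).eval u := by
    intro m k hkm
    have h1 : k + (m-k) = m := by omega
    have hch : ((m.choose k : ℕ) : ℝ) * (k.factorial : ℝ) * ((m-k).factorial : ℝ)
        = (m.factorial : ℝ) := by
      exact_mod_cast congrArg (fun x : ℕ => (x : ℝ)) (Nat.choose_mul_factorial_mul_factorial hkm)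
    have h2 : (2:ℝ)^m = 2^k * 2^(m-k) := by rw [← pow_add, h1]
    simp only [hf]
    rw [show 2*(k+(m-k)) = 2*m by omega]
    have hf1 : ((m-k).factorial : ℝ) ≠ 0 := Nat.cast_ne_zero.2 (Nat.factorial_ne_zero _)
    have hf2 : ((k).factorial : ℝ) ≠ 0 := Nat.cast_ne_zero.2 (Nat.factorial_ne_zero _)
    have hf3 : ((m).factorial : ℝ) ≠ 0 := Nat.cast_ne_zero.2 (Nat.factorial_ne_zero _)
    have h2k : (2:ℝ)^k ≠ 0 := by positivity
    have h2mk : (2:ℝ)^(m-k) ≠ 0 := by positivity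
    have h2m : (2:ℝ)^m ≠ 0 := by positivity
    field_simp
    rw [h2]
    linear_combination (-(c^k * t^(m-k) * ((derivative^[2*m]) p).eval u * 2^k * 2^(m-k))) * hch
  have step1 : Lf u (t+c) p = ∑ m ∈ Finset.range B, ∑ k ∈ Finset.range (m+1), f k (m-k) := by
    rw [Lf_eq_hsum B u (t+c) p hB, hsum]
    refine Finset.sum_congr rfl fun m _ => ?_
    rw [show t + c = c + t by ring, add_pow, Finset.sum_div, Finset.sum_mul]
    refine Finset.sum_congr rfl fun k hk => ?_
    simp only [Finset.mem_range] at hk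
    rw [hkey m k (by omega)]
  rw [step1, tri_swap B f]
  refine Finset.sum_congr rfl fun k hk => ?_
  simp only [Finset.mem_range] at hk
  have step3 : ∑ l ∈ Finset.range (B-k), f k l = ∑ l ∈ Finset.range B, f k l := by
    refine Finset.sum_subset (Finset.range_subset_range.mpr (by omega)) fun l _ hl => ?_
    simp only [Finset.mem_range, not_lt] at hl
    simp only [hf]
    rw [Polynomial.iterate_derivative_eq_zero (by omega : p.natDegree < 2*(k+l))]
    simp
  rw [step3]
  have hdeg : (derivative^[2*k] p).natDegree < B :=
    lt_of_le_of_lt (natDegree_iter_deriv_le p _) hB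
  rw [Lf_eq_hsum B u t _ hdeg, hsum, Finset.mul_sum]
  refine Finset.sum_congr rfl fun l _ => ?_
  simp only [hf]
  rw [show 2*(k+l) = 2*l + 2*k by ring, Function.iterate_add_apply]

lemma Lf_iter_X_mul (u t : ℝ) (r : ℝ[X]) (k : ℕ) :
    Lf u t (derivative^[k] (X * r))
      = u * Lf u t (derivative^[k] r) + t * Lf u t (derivative^[k+1] r)
        + (k:ℝ) * Lf u t (derivative^[k-1] r) := by
  cases k with
  | zero =>
    simp only [Function.iterate_zero_apply, Nat.zero_sub, Nat.cast_zero, zero_mul, add_zero,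
      Function.iterate_one]
    exact Lf_stein u t r
  | succ k =>
    rw [iter_deriv_X_mul r k]
    rw [Lf_add, Lf_smul, Lf_stein]
    have h1 : derivative (derivative^[k+1] r) = derivative^[k+1+1] r :=
      (Function.iterate_succ_apply' _ _ _).symm
    rw [h1]
    simp only [Nat.add_sub_cancel, Nat.cast_add, Nat.cast_one]

lemma Lf_D_C (u t c : ℝ) (k : ℕ) :
    Lf u t (derivative^[k] (C c)) = if k = 0 then c else 0 := by
  cases k with
  | zero => simp [Lf_C]
  | succ k =>
    rw [Polynomial.iterate_derivative_C (Nat.succ_pos k)]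
    simp [Lf_zero]

/-- Wick / Gaussian product formula for the functional `Lf`. -/
lemma Lf_wick (u t : ℝ) : ∀ n : ℕ, ∀ p q : ℝ[X], p.natDegree ≤ n → ∀ B : ℕ, n < B →
    Lf u t (p * q) = ∑ k ∈ Finset.range B,
      t^k/(k.factorial : ℝ) * Lf u t (derivative^[k] p) * Lf u t (derivative^[k] q) := by
  intro n
  induction n using Nat.strong_induction_on with
  | _ n ih =>
    intro p q hpn B hB
    match n, ih with
    | 0, _ =>
      obtain ⟨a, rfl⟩ : ∃ a, p = C a := ⟨p.coeff 0, Polynomial.eq_C_of_natDegree_le_zero hpn⟩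
      rw [← Polynomial.smul_eq_C_mul, Lf_smul]
      rw [Finset.sum_eq_single 0]
      · simp [Lf_C]
      · intro k _ hk
        rw [Lf_D_C, if_neg hk]
        ring
      · intro habs
        exact absurd (Finset.mem_range.mpr hB) habs
    | (m+1), ih =>
      have hBm : m + 2 ≤ B := hB
      set r : ℝ[X] := p.divX with hrdef
      set c : ℝ := p.coeff 0 with hcdef
      have hp : X * r + C c = p := Polynomial.X_mul_divX_add p
      have hr : r.natDegree ≤ m := by
        rw [hrdef, Polynomial.natDegree_divX_eq_natDegree_tsub_one]
        omega
      have hdr : (derivative r).natDegree ≤ m :=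
        le_trans (Polynomial.natDegree_derivative_le r) (le_trans (Nat.sub_le _ _) hr)
      have hq' : ∀ s : ℝ[X], s.natDegree ≤ m → Lf u t (s * q) = ∑ k ∈ Finset.range B,
          t^k/(k.factorial : ℝ) * Lf u t (derivative^[k] s) * Lf u t (derivative^[k] q) :=
        fun s hs => ih m (Nat.lt_succ_self m) s q hs B (by omega)
      -- LHS expansion
      have hLHS : Lf u t (p * q)
          = u * Lf u t (r * q) + t * Lf u t (derivative r * q) + t * Lf u t (r * derivative q)
            + c * Lf u t q := by
        conv_lhs => rw [← hp]
        rw [add_mul, Lf_add, mul_assoc, Lf_stein, ← Polynomial.smul_eq_C_mul, Lf_smul,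
          derivative_mul, Lf_add]
        ring
      -- RHS expansion
      have hLfp : ∀ k, Lf u t (derivative^[k] p)
          = Lf u t (derivative^[k] (X*r)) + (if k = 0 then c else 0) := by
        intro k
        conv_lhs => rw [← hp]
        rw [iterate_map_add, Lf_add, Lf_D_C]
      have hRHS : ∑ k ∈ Finset.range B,
            t^k/(k.factorial : ℝ) * Lf u t (derivative^[k] p) * Lf u t (derivative^[k] q)
          = (∑ k ∈ Finset.range B, t^k/(k.factorial : ℝ)
              * Lf u t (derivative^[k] (X*r)) * Lf u t (derivative^[k] q))
            + c * Lf u t q := by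
        rw [Finset.sum_congr rfl (fun k _ => by rw [hLfp k])]
        have : ∀ k ∈ Finset.range B,
            t^k/(k.factorial : ℝ) * (Lf u t (derivative^[k] (X*r)) + (if k = 0 then c else 0))
              * Lf u t (derivative^[k] q)
            = t^k/(k.factorial : ℝ) * Lf u t (derivative^[k] (X*r)) * Lf u t (derivative^[k] q)
              + (if k = 0 then c * Lf u t q else 0) := by
          intro k _
          split_ifs with hk
          · subst hk; simp; ring
          · simp
        rw [Finset.sum_congr rfl this, Finset.sum_add_distrib, Finset.sum_ite_eq' (Finset.range B) 0
          (fun _ => c * Lf u t q)]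
        simp [Finset.mem_range.mpr (by omega : 0 < B)]
      rw [hLHS, hRHS]
      -- expand the main sum using Lf_iter_X_mul
      have hmain : ∑ k ∈ Finset.range B, t^k/(k.factorial : ℝ)
            * Lf u t (derivative^[k] (X*r)) * Lf u t (derivative^[k] q)
          = u * (∑ k ∈ Finset.range B, t^k/(k.factorial : ℝ)
              * Lf u t (derivative^[k] r) * Lf u t (derivative^[k] q))
            + t * (∑ k ∈ Finset.range B, t^k/(k.factorial : ℝ)
              * Lf u t (derivative^[k+1] r) * Lf u t (derivative^[k] q))
            + (∑ k ∈ Finset.range B, (k:ℝ) * t^k/(k.factorial : ℝ)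
              * Lf u t (derivative^[k-1] r) * Lf u t (derivative^[k] q)) := by
        rw [Finset.mul_sum, Finset.mul_sum, ← Finset.sum_add_distrib, ← Finset.sum_add_distrib]
        refine Finset.sum_congr rfl fun k _ => ?_
        rw [Lf_iter_X_mul]
        ring
      rw [hmain]
      -- piece 2 : t * S(Dr, q)
      have hp2 : ∑ k ∈ Finset.range B, t^k/(k.factorial : ℝ)
            * Lf u t (derivative^[k+1] r) * Lf u t (derivative^[k] q)
          = ∑ k ∈ Finset.range B, t^k/(k.factorial : ℝ)
            * Lf u t (derivative^[k] (derivative r)) * Lf u t (derivative^[k] q) := by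
        refine Finset.sum_congr rfl fun k _ => ?_
        rw [← Function.iterate_succ_apply]
      -- piece 3 : reindex
      have hp3 : ∑ k ∈ Finset.range B, (k:ℝ) * t^k/(k.factorial : ℝ)
            * Lf u t (derivative^[k-1] r) * Lf u t (derivative^[k] q)
          = t * ∑ k ∈ Finset.range B, t^k/(k.factorial : ℝ)
            * Lf u t (derivative^[k] r) * Lf u t (derivative^[k] (derivative q)) := by
        obtain ⟨B0, rfl⟩ : ∃ B0, B = B0 + 1 := ⟨B - 1, by omega⟩
        rw [Finset.sum_range_succ' _ B0]
        simp only [Nat.cast_zero, zero_mul, mul_zero, Nat.cast_succ, pow_zero, zero_div,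
          zero_mul, add_zero]
        rw [Finset.mul_sum, Finset.sum_range_succ]
        have hz : Lf u t (derivative^[B0] r) = 0 := by
          rw [Polynomial.iterate_derivative_eq_zero (by omega : r.natDegree < B0), Lf_zero]
        rw [hz]
        simp only [mul_zero, zero_mul, add_zero]
        refine Finset.sum_congr rfl fun k hk => ?_
        have hfac : ((k+1).factorial : ℝ) = (k+1) * (k.factorial : ℝ) := by
          push_cast [Nat.factorial_succ]; ring
        have hkf : (k.factorial : ℝ) ≠ 0 := Nat.cast_ne_zero.2 (Nat.factorial_ne_zero _)
        have hiter : derivative^[k] (derivative q) = derivative^[k+1] q := by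
          rw [← Function.iterate_succ_apply]
        rw [hiter, Nat.add_sub_cancel, hfac]
        field_simp
        ring
      rw [hp2, hp3, hq' r hr, hq' (derivative r) hdr,
        ih m (Nat.lt_succ_self m) r (derivative q) hr B (by omega)]

lemma Lf_finset_sum {ι : Type*} (v t : ℝ) (s : Finset ι) (f : ι → ℝ[X]) :
    Lf v t (∑ i ∈ s, f i) = ∑ i ∈ s, Lf v t (f i) := by
  classical
  induction s using Finset.cons_induction with
  | empty => simp [Lf_zero]
  | cons a s ha ih => rw [Finset.sum_cons, Finset.sum_cons, Lf_add, ih]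

lemma Lf_eq_sum_range (u t : ℝ) (p : ℝ[X]) :
    Lf u t p = ∑ j ∈ Finset.range (p.natDegree+1), p.coeff j * DeltaFun j u t := by
  conv_lhs => rw [p.as_sum_range]
  rw [Lf_finset_sum]
  refine Finset.sum_congr rfl fun j _ => ?_
  rw [← Polynomial.smul_X_eq_monomial, Lf_smul, Lf_X_pow]

lemma Lf_t_zero (u : ℝ) (p : ℝ[X]) : Lf u 0 p = p.eval u := by
  rw [Lf_eq_sum_range, Polynomial.eval_eq_sum_range]
  exact Finset.sum_congr rfl fun j _ => by rw [DeltaFun_t_zero]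

lemma Lf_iterN (u t : ℝ) (q : ℝ[X]) (N : ℕ) (hq : q.natDegree = N) (hm : q.Monic) :
    Lf u t (derivative^[N] q) = (N.factorial : ℝ) := by
  have hd : (derivative^[N] q).natDegree = 0 := by
    have := Polynomial.natDegree_iterate_derivative q N
    omega
  have hc : (derivative^[N] q).coeff 0 = (N.factorial : ℝ) := by
    rw [Polynomial.coeff_iterate_derivative]
    simp only [zero_add, Nat.descFactorial_self]
    rw [show q.coeff N = 1 from by rw [← hq]; exact hm.coeff_natDegree]
    simp
  rw [Polynomial.eq_C_of_natDegree_le_zero (le_of_eq hd), hc, Lf_C]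

/-- Equilibrium states of the Gaussian-EQMOM system lie in `Ω_W^{eq}`: if the first
`2N+1` moments of the mixture match those of the Gaussian `(ρ, U, θ)`, then all the
nodes equal `U`, the common variance equals `θ`, and the weights sum to `ρ`. -/
theorem stmt15 (N : ℕ) (hN : 1 ≤ N) (w u : Fin N → ℝ) (hw : ∀ i, 0 < w i)
    (σ2 : ℝ) (hσ : 0 < σ2) (ρ U θ : ℝ)
    (h : ∀ j ≤ 2*N, ∑ i, w i * DeltaFun j (u i) σ2 = ρ * DeltaFun j U θ) :
    (∀ i, u i = U) ∧ σ2 = θ ∧ ∑ i, w i = ρ := by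
  have hne : Nonempty (Fin N) := ⟨⟨0, by omega⟩⟩
  have e0 : ∑ i, w i = ρ := by
    have := h 0 (by omega)
    simpa [DeltaFun_zero] using this
  have e1 : ∑ i, w i * u i = ρ * U := by
    have := h 1 (by omega)
    simpa [DeltaFun_one] using this
  have e2 : ∑ i, w i * (u i^2 + σ2) = ρ * (U^2 + θ) := by
    have := h 2 (by omega)
    simpa [DeltaFun_two] using this
  have hρ : 0 < ρ := by
    rw [← e0]
    exact Finset.sum_pos (fun i _ => hw i) Finset.univ_nonempty
  have hkey : ∑ i, w i * (u i - U)^2 = ρ * (θ - σ2) := by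
    have hexp : ∑ i, w i * (u i - U)^2
        = (∑ i, w i * (u i^2 + σ2)) - 2*U*(∑ i, w i * u i)
          + U^2*(∑ i, w i) - σ2*(∑ i, w i) := by
      rw [Finset.mul_sum, Finset.mul_sum, Finset.mul_sum, ← Finset.sum_sub_distrib,
        ← Finset.sum_add_distrib, ← Finset.sum_sub_distrib]
      exact Finset.sum_congr rfl fun i _ => by ring
    rw [hexp, e0, e1, e2]
    ring
  have hsumsq : 0 ≤ ∑ i, w i * (u i - U)^2 :=
    Finset.sum_nonneg fun i _ => mul_nonneg (hw i).le (sq_nonneg _)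
  have hτge : 0 ≤ θ - σ2 := by nlinarith
  have hτle : ¬ (0 < θ - σ2) := by
    intro hτ
    set q : ℝ[X] := ∏ i : Fin N, (X - C (u i)) with hqdef
    have hmon : ∀ i ∈ (Finset.univ : Finset (Fin N)), (X - C (u i)).Monic :=
      fun i _ => monic_X_sub_C (u i)
    have hmq : q.Monic := monic_prod_of_monic _ _ hmon
    have hdq : q.natDegree = N := by
      rw [hqdef, Polynomial.natDegree_prod_of_monic _ _ hmon]
      simp [natDegree_X_sub_C]
    have heval : ∀ i, q.eval (u i) = 0 := by
      intro i
      rw [hqdef, Polynomial.eval_prod]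
      exact Finset.prod_eq_zero (Finset.mem_univ i) (by simp)
    have hq0 : q ≠ 0 := hmq.ne_zero
    have hdqq : (q*q).natDegree = 2*N := by
      rw [Polynomial.natDegree_mul hq0 hq0, hdq]; ring
    set B : ℕ := 2*N + 1 with hBdef
    have htrans : ∀ r : ℝ[X], r.natDegree ≤ 2*N →
        ∑ i, w i * Lf (u i) σ2 r = ρ * Lf U θ r := by
      intro r hr
      rw [Lf_eq_sum_range U θ r, Finset.mul_sum]
      have hterm : ∀ i : Fin N, w i * Lf (u i) σ2 r
          = ∑ j ∈ Finset.range (r.natDegree+1), w i * (r.coeff j * DeltaFun j (u i) σ2) :=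
        fun i => by rw [Lf_eq_sum_range, Finset.mul_sum]
      rw [Finset.sum_congr rfl (fun i _ => hterm i), Finset.sum_comm]
      refine Finset.sum_congr rfl fun j hj => ?_
      simp only [Finset.mem_range] at hj
      have hswap : ∑ i, w i * (r.coeff j * DeltaFun j (u i) σ2)
          = r.coeff j * ∑ i, w i * DeltaFun j (u i) σ2 := by
        rw [Finset.mul_sum]
        exact Finset.sum_congr rfl fun i _ => by ring
      rw [hswap, h j (by omega)]
      ring
    have hz : ∑ i, w i * (q*q).eval (u i) = 0 := by
      refine Finset.sum_eq_zero fun i _ => ?_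
      rw [Polynomial.eval_mul, heval i]
      ring
    have hstep : ∑ i, w i * (q*q).eval (u i) = ρ * Lf U (θ + (-σ2)) (q*q) := by
      have hsemi : ∀ v : ℝ, Lf v 0 (q*q)
          = ∑ k ∈ Finset.range B, (-σ2)^k/(2^k * (k.factorial : ℝ))
              * Lf v σ2 (derivative^[2*k] (q*q)) := by
        intro v
        rw [show (0:ℝ) = σ2 + (-σ2) by ring]
        exact Lf_semigroup v σ2 (-σ2) (q*q) B (by omega)
      have hterm : ∀ i : Fin N, w i * (q*q).eval (u i)
          = ∑ k ∈ Finset.range B, (-σ2)^k/(2^k * (k.factorial : ℝ))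
              * (w i * Lf (u i) σ2 (derivative^[2*k] (q*q))) := by
        intro i
        rw [← Lf_t_zero, hsemi (u i), Finset.mul_sum]
        exact Finset.sum_congr rfl fun k _ => by ring
      rw [Finset.sum_congr rfl (fun i _ => hterm i), Finset.sum_comm]
      rw [Lf_semigroup U θ (-σ2) (q*q) B (by omega), Finset.mul_sum]
      refine Finset.sum_congr rfl fun k _ => ?_
      have hdeg : (derivative^[2*k] (q*q)).natDegree ≤ 2*N := by
        have := natDegree_iter_deriv_le (q*q) (2*k)
        omega
      rw [← Finset.mul_sum, htrans _ hdeg]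
      ring
    have hmain : ρ * Lf U (θ - σ2) (q*q) = 0 := by
      rw [show θ - σ2 = θ + (-σ2) by ring, ← hstep]
      exact hz
    have hwick := Lf_wick U (θ-σ2) N q q (le_of_eq hdq) (N+1) (Nat.lt_succ_self N)
    have hpos : 0 < Lf U (θ-σ2) (q*q) := by
      rw [hwick]
      apply Finset.sum_pos'
      · intro k _
        rw [mul_assoc]
        exact mul_nonneg (by positivity) (mul_self_nonneg _)
      · refine ⟨N, Finset.self_mem_range_succ N, ?_⟩
        rw [Lf_iterN U (θ-σ2) q N hdq hmq]
        have hNf : (0:ℝ) < (N.factorial:ℝ) := by exact_mod_cast N.factorial_pos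
        positivity
    nlinarith
  have hθ : σ2 = θ := by
    have := not_lt.mp hτle
    linarith
  have hzero : ∑ i, w i * (u i - U)^2 = 0 := by
    have hts : θ - σ2 = 0 := by linarith
    rw [hkey, hts, mul_zero]
  have hui : ∀ i, u i = U := by
    intro i
    have hall := (Finset.sum_eq_zero_iff_of_nonneg
      (fun i _ => mul_nonneg (hw i).le (sq_nonneg _))).mp hzero i (Finset.mem_univ i)
    have hsq : (u i - U)^2 = 0 := by
      rcases mul_eq_zero.mp hall with h' | h'
      · exact absurd h' (ne_of_gt (hw i))
      · exact h'
    have := pow_eq_zero_iff (two_ne_zero) |>.mp hsq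
    linarith
  exact ⟨hui, hθ, e0⟩
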